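/- Let T be a positive-definite diagonal matrix and K symmetric positive definite, and let Σ_ss be the unique solution of KΣ + ΣK = 2k_B T. Then Σ_ss = k_B T K^{−1} (equivalently, the probability current vanishes: −γ^{−1}K + γ^{−1}k_B T Σ_ss^{−1} = 0) if and only if K and T commute. -/

import Mathlib

open Matrix

lemma lyap_unique {n : ℕ} {K D : Matrix (Fin n) (Fin n) ℝ} (hKpd : K.PosDef)
    (h : K * D + D * K = 0) : D = 0 := by
  have hH := hKpd.1
  set U : Matrix (Fin n) (Fin n) ℝ := (hH.eigenvectorUnitary : Matrix (Fin n) (Fin n) ℝ) with hU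
  have hUU : star U * U = 1 := (Matrix.mem_unitaryGroup_iff').mp hH.eigenvectorUnitary.2
  have hUU' : U * star U = 1 := (Matrix.mem_unitaryGroup_iff).mp hH.eigenvectorUnitary.2
  set Λ : Matrix (Fin n) (Fin n) ℝ := diagonal (RCLike.ofReal ∘ hH.eigenvalues) with hΛ
  have hdiag : star U * K * U = Λ := by
    rw [hΛ, ← hH.conjStarAlgAut_star_eigenvectorUnitary, Unitary.conjStarAlgAut_apply,
      Unitary.coe_star, star_star]
  set E : Matrix (Fin n) (Fin n) ℝ := star U * D * U with hE
  have hmul : ∀ A B : Matrix (Fin n) (Fin n) ℝ,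
      (star U * A * U) * (star U * B * U) = star U * (A * B) * U := by
    intro A B
    simp only [← Matrix.mul_assoc]
    rw [Matrix.mul_assoc (star U * A) U (star U), hUU', Matrix.mul_one,
      Matrix.mul_assoc (star U) A B]
  have h1 : Λ * E = star U * (K * D) * U := by rw [← hdiag, hE, hmul]
  have h2 : E * Λ = star U * (D * K) * U := by rw [← hdiag, hE, hmul]
  have key : Λ * E + E * Λ = 0 := by
    rw [h1, h2, ← Matrix.add_mul, ← Matrix.mul_add, h]
    simp
  have hE0 : E = 0 := by
    ext i j
    have hk := congrFun (congrFun key i) j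
    simp only [Matrix.add_apply, hΛ, Matrix.diagonal_mul, Matrix.mul_diagonal,
      Matrix.zero_apply, Function.comp_apply, RCLike.ofReal_real_eq_id, id_eq] at hk
    have hpos : 0 < hH.eigenvalues i + hH.eigenvalues j :=
      add_pos (hKpd.eigenvalues_pos i) (hKpd.eigenvalues_pos j)
    have : (hH.eigenvalues i + hH.eigenvalues j) * E i j = 0 := by linarith [hk]
    have := mul_eq_zero.mp this
    simp only [Matrix.zero_apply]
    rcases this with h' | h'
    · exact absurd h' hpos.ne'
    · exact h'
  have hD : D = U * E * star U := by
    rw [hE]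
    simp only [← Matrix.mul_assoc]
    rw [hUU', Matrix.one_mul, Matrix.mul_assoc, hUU', Matrix.mul_one]
  rw [hD, hE0]; simp

/-- For the unique steady-state solution `Σ_ss` of `KΣ + ΣK = 2k_B T`, detailed
balance (`Σ_ss = k_B T K⁻¹`, equivalently a vanishing probability current
`−γ⁻¹K + γ⁻¹ k_B T Σ_ss⁻¹ = 0`) holds if and only if `K` and `T` commute. -/
theorem detailed_balance_iff_commute
    (n : ℕ) (kB γ : ℝ) (hkB : 0 < kB) (hγ : 0 < γ)
    (d : Fin n → ℝ) (hd : ∀ i, 0 < d i)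
    (T : Matrix (Fin n) (Fin n) ℝ) (hT : T = Matrix.diagonal d)
    (K : Matrix (Fin n) (Fin n) ℝ) (hK : K.IsSymm) (hKpd : K.PosDef)
    (Sss : Matrix (Fin n) (Fin n) ℝ)
    (hSss : K * Sss + Sss * K = (2 * kB) • T) :
    (Sss = kB • (T * K⁻¹) ∧ -(γ⁻¹ • K) + (γ⁻¹ * kB) • (T * Sss⁻¹) = 0)
      ↔ K * T = T * K := by
  have hKdet : IsUnit K.det := isUnit_iff_ne_zero.mpr hKpd.det_pos.ne'
  have hKinv : K⁻¹ * K = 1 := Matrix.nonsing_inv_mul K hKdet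
  have hKinv' : K * K⁻¹ = 1 := Matrix.mul_nonsing_inv K hKdet
  have hTdet : IsUnit T.det := by
    rw [hT, Matrix.det_diagonal]
    exact isUnit_iff_ne_zero.mpr (Finset.prod_ne_zero_iff.mpr fun i _ => (hd i).ne')
  have hTinv : T * T⁻¹ = 1 := Matrix.mul_nonsing_inv T hTdet
  have hkB0 : kB ≠ 0 := hkB.ne'
  constructor
  · rintro ⟨h1, -⟩
    rw [h1] at hSss
    have : kB • (K * (T * K⁻¹)) + kB • (T * K⁻¹ * K) = (2 * kB) • T := by
      simpa [Matrix.mul_smul, Matrix.smul_mul] using hSss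
    rw [Matrix.mul_assoc T, hKinv, Matrix.mul_one] at this
    have h2 : kB • (K * (T * K⁻¹)) = kB • T := by
      have := congrArg (fun M => M - kB • T) this
      rw [add_sub_cancel_right] at this
      rw [this, two_mul, add_smul, add_sub_cancel_right]
    have h3 : K * (T * K⁻¹) = T := smul_right_injective _ hkB0 h2
    calc K * T = K * (T * K⁻¹) * K := by rw [Matrix.mul_assoc, Matrix.mul_assoc, hKinv,
          Matrix.mul_one]
      _ = T * K := by rw [h3]
  · intro hcomm
    have hcomm' : K⁻¹ * T = T * K⁻¹ := by
      calc K⁻¹ * T = K⁻¹ * T * (K * K⁻¹) := by rw [hKinv', Matrix.mul_one]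
        _ = K⁻¹ * (T * K) * K⁻¹ := by noncomm_ring
        _ = K⁻¹ * (K * T) * K⁻¹ := by rw [hcomm]
        _ = T * K⁻¹ := by rw [← Matrix.mul_assoc, hKinv, Matrix.one_mul]
    have hC : K * (kB • (T * K⁻¹)) + (kB • (T * K⁻¹)) * K = (2 * kB) • T := by
      rw [Matrix.mul_smul, Matrix.smul_mul]
      rw [← Matrix.mul_assoc, hcomm, Matrix.mul_assoc T, hKinv', Matrix.mul_one]
      rw [Matrix.mul_assoc, hKinv, Matrix.mul_one]
      rw [← add_smul, two_mul, add_smul]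
    have hD : K * (Sss - kB • (T * K⁻¹)) + (Sss - kB • (T * K⁻¹)) * K = 0 := by
      rw [Matrix.mul_sub, Matrix.sub_mul]
      rw [show K * Sss - K * (kB • (T * K⁻¹)) + (Sss * K - kB • (T * K⁻¹) * K)
        = (K * Sss + Sss * K) - (K * (kB • (T * K⁻¹)) + (kB • (T * K⁻¹)) * K) by abel]
      rw [hSss, hC, sub_self]
    have h1 : Sss = kB • (T * K⁻¹) := by
      have := lyap_unique hKpd hD
      rwa [sub_eq_zero] at this
    refine ⟨h1, ?_⟩
    have hSinv : Sss⁻¹ = kB⁻¹ • (K * T⁻¹) := by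
      apply Matrix.inv_eq_right_inv
      rw [h1, Matrix.smul_mul, Matrix.mul_smul, smul_smul, mul_inv_cancel₀ hkB0, one_smul]
      rw [Matrix.mul_assoc, ← Matrix.mul_assoc K⁻¹, hKinv, Matrix.one_mul, hTinv]
    rw [hSinv, Matrix.mul_smul, ← Matrix.mul_assoc, ← hcomm, Matrix.mul_assoc, hTinv,
      Matrix.mul_one, smul_smul, mul_assoc, mul_inv_cancel₀ hkB0, mul_one]
    simp
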